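/- arXiv:0903.2328 — 3 statements merged into one kernel-verified Lean document; each statement's English description precedes it below -/
import Mathlib

section
/- With P_k defined by P_1(X) = X and P_{k+1}(X) = P_k'(X)·X·(1 - X) + (k+1)·X·P_k(X), let A_{k-1} denote the coefficient of X^{k-1} in P_k. Then A_k = k + 2·A_{k-1} for all k ≥ 2, with A_0 = 0 and A_1 = 1. -/
open Polynomial

/-- With `P_k` defined by `P_1(X) = X` and
`P_{k+1}(X) = P_k'(X)·X·(1 - X) + (k+1)·X·P_k(X)`, let `A_{k-1}` denote the coefficient
of `X^{k-1}` in `P_k`. Then `A_k = k + 2·A_{k-1}` for all `k ≥ 2`, with `A_0 = 0` and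
`A_1 = 1`. -/
theorem recurrence_subleading_coeff (P : ℕ → Polynomial ℂ)
    (h1 : P 1 = X)
    (hrec : ∀ k : ℕ, 1 ≤ k →
      P (k + 1) = (derivative (P k)) * X * (1 - X) + C ((k : ℂ) + 1) * X * P k) :
    (P 1).coeff 0 = 0 ∧ (P 2).coeff 1 = 1 ∧
      ∀ k : ℕ, 2 ≤ k → (P (k + 1)).coeff k = (k : ℂ) + 2 * (P k).coeff (k - 1) := by
  have key : ∀ k : ℕ, 1 ≤ k → (P k).natDegree ≤ k ∧ (P k).coeff k = 1 := by
    intro k hk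
    induction k, hk using Nat.le_induction with
    | base => simp [h1, natDegree_X_le]
    | succ k hk ih =>
      obtain ⟨hd, hc⟩ := ih
      have hsplit : P (k + 1) = derivative (P k) * X - derivative (P k) * X * X
          + C ((k : ℂ) + 1) * (X * P k) := by
        rw [hrec k hk]; ring
      constructor
      · rw [hrec k hk]
        refine le_trans (natDegree_add_le _ _) (max_le ?_ ?_)
        · refine le_trans (natDegree_mul_le) ?_
          have h1' : (derivative (P k) * X).natDegree ≤ k := by
            refine le_trans natDegree_mul_le ?_
            have := natDegree_derivative_le (P k)
            have := natDegree_X_le (R := ℂ)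
            omega
          have h2' : ((1 : ℂ[X]) - X).natDegree ≤ 1 := by
            refine le_trans (natDegree_sub_le _ _) ?_
            simp [natDegree_X_le]
          omega
        · refine le_trans natDegree_mul_le ?_
          have h1' : (C ((k : ℂ) + 1) * X).natDegree ≤ 1 :=
            le_trans (natDegree_C_mul_le _ _) natDegree_X_le
          omega
      · obtain ⟨m, rfl⟩ := Nat.exists_eq_add_of_le' hk
        have hz : (P (m + 1)).coeff (m + 1 + 1) = 0 :=
          coeff_eq_zero_of_natDegree_lt (by omega)
        rw [hsplit]
        simp only [coeff_add, coeff_sub, coeff_mul_X, coeff_derivative, coeff_C_mul,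
          coeff_X_mul, hz, hc]
        push_cast
        ring
  refine ⟨by simp [h1], ?_, ?_⟩
  · rw [hrec 1 le_rfl, h1, Nat.cast_one]
    have : (derivative (X : ℂ[X])) * X * (1 - X) + C ((1 : ℂ) + 1) * X * X
        = X + C 1 * X ^ 2 := by
      simp [derivative_X]; ring
    rw [this]
    simp
  · intro k hk
    obtain ⟨hd, hc⟩ := key k (by omega)
    obtain ⟨m, rfl⟩ := Nat.exists_eq_add_of_le' hk
    have hsplit : P (m + 2 + 1) = derivative (P (m + 2)) * X
        - derivative (P (m + 2)) * X * X + C (((m + 2 : ℕ) : ℂ) + 1) * (X * P (m + 2)) := by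
      rw [hrec (m + 2) (by omega)]; ring
    rw [hsplit]
    rw [show m + 2 = m + 1 + 1 from rfl] at hc ⊢
    simp only [coeff_add, coeff_sub, coeff_mul_X, coeff_derivative, coeff_C_mul,
      coeff_X_mul, hc, Nat.add_sub_cancel]
    push_cast
    ring
end

section
/- For every integer k ≥ 3, the function g(z) = 1/(1 - e^z) has a zero of its k-th derivative at some point z with e^z not of modulus 1, i.e., with Re(z) ≠ 0; consequently g^{(k)} has infinitely many zeros off the imaginary axis. -/
open Complex Polynomial Filter

open Polynomial Filter

noncomputable section ZeroAux

/-- The logistic-type function `φ(x) = 1/(1+e^x)`. -/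
def logphi (x : ℝ) : ℝ := (1 + Real.exp x)⁻¹

/-- The polynomials expressing derivatives of `logphi`. -/
def PP : ℕ → Polynomial ℝ
  | 0 => X
  | (j+1) => derivative (PP j) * (X ^ 2 - X)

lemma one_add_exp_pos (x : ℝ) : 0 < 1 + Real.exp x := by positivity

lemma logphi_pos (x : ℝ) : 0 < logphi x := by
  unfold logphi; positivity

lemma logphi_zero : logphi 0 = 1/2 := by simp [logphi]; norm_num

lemma logphi_lt_half {x : ℝ} (hx : 0 < x) : logphi x < 1/2 := by
  unfold logphi
  rw [inv_lt_comm₀ (one_add_exp_pos x) (by norm_num)]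
  have h1 : (1:ℝ) < Real.exp x := Real.one_lt_exp_iff.2 hx
  norm_num
  linarith

lemma logphi_strictAnti : StrictAnti logphi := by
  intro a b hab
  unfold logphi
  exact inv_strictAnti₀ (one_add_exp_pos a) (by linarith [Real.exp_lt_exp.2 hab])

lemma hasDerivAt_logphi (x : ℝ) :
    HasDerivAt logphi (logphi x ^ 2 - logphi x) x := by
  have h : HasDerivAt (fun x : ℝ => 1 + Real.exp x) (Real.exp x) x :=
    (Real.hasDerivAt_exp x).const_add 1
  have h2 := h.inv (one_add_exp_pos x).ne'
  refine h2.congr_deriv ?_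
  unfold logphi
  have hne := (one_add_exp_pos x).ne'
  field_simp
  ring

lemma hasDerivAt_r (j : ℕ) (x : ℝ) :
    HasDerivAt (fun x => (PP j).eval (logphi x)) ((PP (j+1)).eval (logphi x)) x := by
  have h := ((PP j).hasDerivAt (logphi x)).comp x (hasDerivAt_logphi x)
  refine h.congr_deriv ?_
  simp [PP]

lemma PP_ne_zero_and_eval_zero (j : ℕ) : PP j ≠ 0 ∧ (PP j).eval 0 = 0 := by
  induction j with
  | zero => exact ⟨X_ne_zero, by simp [PP]⟩
  | succ j ih =>
    obtain ⟨h1, h2⟩ := ih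
    constructor
    · simp only [PP]
      apply mul_ne_zero
      · intro hd
        have hdeg := natDegree_eq_zero_of_derivative_eq_zero hd
        have := Polynomial.eq_C_of_natDegree_eq_zero hdeg
        rw [this] at h2 h1
        simp at h2
        rw [h2] at h1
        simp at h1
      · intro hq
        have : (X ^ 2 - X : ℝ[X]).eval 2 = 0 := by rw [hq]; simp
        norm_num at this
    · simp [PP]

lemma tendsto_logphi : Tendsto logphi atTop (nhds 0) := by
  unfold logphi
  apply Tendsto.inv_tendsto_atTop
  exact tendsto_atTop_add_const_left _ 1 Real.tendsto_exp_atTop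

lemma tendsto_r (j : ℕ) :
    Tendsto (fun x => (PP j).eval (logphi x)) atTop (nhds 0) := by
  have h := ((PP j).continuousAt (a := (0:ℝ))).tendsto.comp tendsto_logphi
  rwa [(PP_ne_zero_and_eval_zero j).2] at h

/-- Helper: a function vanishing at `a`, tending to `0` at `+∞`, positive somewhere
to the right, has a critical point to the right of `a`. -/
lemma exists_deriv_zero_aux {h h' : ℝ → ℝ} (hd : ∀ x, HasDerivAt h (h' x) x)
    {a b : ℝ} (hab : a < b) (ha : h a = 0) (hb : 0 < h b)
    (h0 : Tendsto h atTop (nhds 0)) : ∃ c, a < c ∧ h' c = 0 := by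
  have hdiff : Differentiable ℝ h := fun x => (hd x).differentiableAt
  have hcont : Continuous h := hdiff.continuous
  obtain ⟨R, hR⟩ : ∃ R, ∀ x ≥ R, h x < h b := by
    have hev : ∀ᶠ x in atTop, h x < h b := h0.eventually (eventually_lt_nhds hb)
    exact eventually_atTop.mp hev
  set R' : ℝ := max R (b + 1) with hR'def
  have haR' : a < R' := lt_of_lt_of_le (by linarith) (le_max_right _ _)
  have hbR' : b < R' := lt_of_lt_of_le (by linarith) (le_max_right _ _)
  have hRR' : R ≤ R' := le_max_left _ _
  obtain ⟨c, hcmem, hcmax⟩ :=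
    (isCompact_Icc (a := a) (b := R')).exists_isMaxOn
      ⟨a, Set.mem_Icc.2 ⟨le_rfl, haR'.le⟩⟩ hcont.continuousOn
  have hbmem : b ∈ Set.Icc a R' := Set.mem_Icc.2 ⟨hab.le, hbR'.le⟩
  have hcb : h b ≤ h c := hcmax hbmem
  have hca : a < c := by
    rcases (Set.mem_Icc.1 hcmem).1.lt_or_eq with h1 | h1
    · exact h1
    · exfalso; rw [h1] at ha; linarith
  have hcR' : c < R' := by
    rcases (Set.mem_Icc.1 hcmem).2.lt_or_eq with h1 | h1
    · exact h1
    · exfalso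
      have := hR R' hRR'
      rw [← h1] at this
      linarith
  refine ⟨c, hca, ?_⟩
  have hloc : IsLocalMax h c := by
    have hmem : Set.Icc a R' ∈ nhds c :=
      mem_nhds_iff.2 ⟨Set.Ioo a R', Set.Ioo_subset_Icc_self, isOpen_Ioo, ⟨hca, hcR'⟩⟩
    exact Filter.eventually_of_mem hmem hcmax
  exact hloc.hasDerivAt_eq_zero (hd c)

/-- Either sign version. -/
lemma exists_deriv_zero {h h' : ℝ → ℝ} (hd : ∀ x, HasDerivAt h (h' x) x)
    {a b : ℝ} (hab : a < b) (ha : h a = 0) (hb : h b ≠ 0)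
    (h0 : Tendsto h atTop (nhds 0)) : ∃ c, a < c ∧ h' c = 0 := by
  rcases hb.lt_or_gt with hb' | hb'
  · obtain ⟨c, hc1, hc2⟩ := exists_deriv_zero_aux (h := fun x => -h x) (h' := fun x => -h' x)
      (fun x => (hd x).neg) hab (by simp [ha]) (by simpa using hb') (by simpa using h0.neg)
    exact ⟨c, hc1, by simpa using hc2⟩
  · exact exists_deriv_zero_aux hd hab ha hb' h0

/-- The main real statement: for each `k ≥ 3` the `k`-th polynomial has a root
at `logphi x` for some positive `x`. -/
lemma main_real : ∀ k, 3 ≤ k → ∃ x : ℝ, 0 < x ∧ (PP k).eval (logphi x) = 0 := by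
  have key : ∀ k, (∃ x : ℝ, 0 < x ∧ (PP k).eval (logphi x) = 0) →
      ∃ x : ℝ, 0 < x ∧ (PP (k+1)).eval (logphi x) = 0 := by
    intro k ⟨x, hx, hroot⟩
    have hfin : {y : ℝ | (PP k).eval (logphi y) = 0}.Finite := by
      have : {y : ℝ | (PP k).eval (logphi y) = 0} = logphi ⁻¹' {t | (PP k).IsRoot t} := rfl
      rw [this]
      exact Set.Finite.preimage (Set.injOn_of_injective logphi_strictAnti.injective)
        (Polynomial.finite_setOf_isRoot (PP_ne_zero_and_eval_zero k).1)
    obtain ⟨M, hM⟩ := hfin.bddAbove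
    have hb : (PP k).eval (logphi (max x M + 1)) ≠ 0 := by
      intro hzero
      have : max x M + 1 ≤ M := hM hzero
      have : M ≤ max x M := le_max_right _ _
      linarith
    obtain ⟨c, hc1, hc2⟩ := exists_deriv_zero (hasDerivAt_r k)
      (lt_of_le_of_lt (le_max_left x M) (by linarith)) hroot hb (tendsto_r k)
    exact ⟨c, hx.trans hc1, hc2⟩
  intro k hk
  induction k with
  | zero => omega
  | succ k ih =>
    rcases Nat.lt_or_ge k 3 with h3 | h3
    · -- k + 1 = 3, base case
      have hk3 : k = 2 := by omega
      subst hk3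
      have ha : (PP 2).eval (logphi 0) = 0 := by
        rw [logphi_zero]
        simp [PP]
        norm_num
      have hb : (PP 2).eval (logphi 1) ≠ 0 := by
        have h1 : 0 < logphi 1 := logphi_pos 1
        have h2 : logphi 1 < 1/2 := logphi_lt_half one_pos
        set t := logphi 1
        have he : (PP 2).eval t = (2*t-1)*(t^2-t) := by simp [PP]; norm_num
        rw [he]
        intro hz
        nlinarith [mul_pos (mul_pos (show (0:ℝ) < 1 - 2*t by linarith) h1)
          (show (0:ℝ) < 1 - t by linarith)]
      obtain ⟨c, hc1, hc2⟩ := exists_deriv_zero (hasDerivAt_r 2) one_pos ha hb (tendsto_r 2)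
      exact ⟨c, hc1, hc2⟩
    · exact key k (ih h3)

end ZeroAux

noncomputable section CAux

def gg : ℂ → ℂ := fun w => 1 / (1 - Complex.exp w)

def UU : Set ℂ := {z : ℂ | Complex.exp z ≠ 1}

lemma isOpen_UU : IsOpen UU :=
  isOpen_compl_singleton.preimage Complex.continuous_exp

lemma analyticOnNhd_gg : AnalyticOnNhd ℂ gg UU := by
  apply DifferentiableOn.analyticOnNhd _ isOpen_UU
  intro z hz
  apply DifferentiableWithinAt.div
  · exact differentiableWithinAt_const 1
  · exact (((differentiable_const (1:ℂ)).sub Complex.differentiable_exp) z).differentiableWithinAt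
  · exact sub_ne_zero.2 fun h => hz h.symm

lemma analyticOnNhd_G (j : ℕ) : AnalyticOnNhd ℂ (iteratedDeriv j gg) UU := by
  rw [iteratedDeriv_eq_iterate]
  exact analyticOnNhd_gg.iterated_deriv j

lemma hasDerivAt_G (j : ℕ) {z : ℂ} (hz : z ∈ UU) :
    HasDerivAt (iteratedDeriv j gg) (iteratedDeriv (j+1) gg z) z := by
  rw [iteratedDeriv_succ]
  exact ((analyticOnNhd_G j z hz).differentiableAt).hasDerivAt

lemma exp_line (x : ℝ) : Complex.exp ((x : ℂ) + Real.pi * I) = -(Real.exp x : ℂ) := by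
  rw [Complex.exp_add, Complex.exp_pi_mul_I, ← Complex.ofReal_exp]
  ring

lemma line_mem_UU (x : ℝ) : (x : ℂ) + Real.pi * I ∈ UU := by
  intro h
  rw [exp_line] at h
  have := congrArg Complex.re h
  simp [Complex.exp_ofReal_re] at this
  linarith [Real.exp_pos x]

lemma hasDerivAt_line (j : ℕ) (x : ℝ) :
    HasDerivAt (fun y : ℝ => iteratedDeriv j gg ((y : ℂ) + Real.pi * I))
      (iteratedDeriv (j+1) gg ((x : ℂ) + Real.pi * I)) x := by
  have h1 : HasDerivAt (fun w : ℂ => iteratedDeriv j gg (w + Real.pi * I))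
      (iteratedDeriv (j+1) gg ((x : ℂ) + Real.pi * I)) (x : ℂ) := by
    have h2 := hasDerivAt_G j (line_mem_UU x)
    have h3 : HasDerivAt (fun w : ℂ => w + (Real.pi : ℂ) * I) 1 (x:ℂ) :=
      (hasDerivAt_id _).add_const _
    exact (h2.comp (x:ℂ) h3).congr_deriv (mul_one _)
  exact h1.comp_ofReal

lemma gg_periodic : Function.Periodic gg (2 * Real.pi * I) := by
  intro z
  simp only [gg]
  rw [Complex.exp_periodic z]

lemma G_periodic (k : ℕ) : Function.Periodic (iteratedDeriv k gg) (2 * Real.pi * I) := by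
  intro z
  have h := iteratedDeriv_comp_add_const k gg (2 * Real.pi * I)
  have h2 : (fun w : ℂ => gg (w + 2 * Real.pi * I)) = gg := funext gg_periodic
  rw [h2] at h
  exact (congrFun h z).symm

lemma formula : ∀ (j : ℕ) (x : ℝ),
    iteratedDeriv j gg ((x : ℂ) + Real.pi * I) = (((PP j).eval (logphi x) : ℝ) : ℂ) := by
  intro j
  induction j with
  | zero =>
    intro x
    simp only [iteratedDeriv_zero]
    have : gg ((x:ℂ) + Real.pi * I) = 1 / (1 - Complex.exp ((x:ℂ) + Real.pi * I)) := rfl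
    rw [this, exp_line, sub_neg_eq_add]
    simp only [PP, eval_X, logphi]
    rw [one_div, Complex.ofReal_inv]
    push_cast
    ring_nf
  | succ j ih =>
    intro x
    have hfun : (fun y : ℝ => iteratedDeriv j gg ((y:ℂ) + Real.pi * I))
        = fun y : ℝ => (((PP j).eval (logphi y) : ℝ) : ℂ) := _root_.funext ih
    have h1 := hasDerivAt_line j x
    rw [hfun] at h1
    have h2 : HasDerivAt (fun y : ℝ => (((PP j).eval (logphi y) : ℝ) : ℂ))
        (((PP (j+1)).eval (logphi x) : ℝ) : ℂ) x := (hasDerivAt_r j x).ofReal_comp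
    exact h1.unique h2

end CAux

open Complex in
/-- For every integer `k ≥ 3`, the `k`-th derivative of `g(z) = 1/(1 - e^z)` has a zero
at some point `z` with `e^z` not of modulus `1`, i.e. with `Re z ≠ 0`; consequently
`g^{(k)}` has infinitely many zeros off the imaginary axis. -/
theorem infinitely_many_nonimaginary_zeros (k : ℕ) (hk : 3 ≤ k) :
    (∃ z : ℂ, z.re ≠ 0 ∧
        iteratedDeriv k (fun w : ℂ => 1 / (1 - Complex.exp w)) z = 0) ∧
      {z : ℂ | z.re ≠ 0 ∧
        iteratedDeriv k (fun w : ℂ => 1 / (1 - Complex.exp w)) z = 0}.Infinite := by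
  have hgg : (fun w : ℂ => 1 / (1 - Complex.exp w)) = gg := rfl
  rw [hgg]
  obtain ⟨x0, hx0, hroot⟩ := main_real k hk
  set z0 : ℂ := (x0 : ℂ) + Real.pi * I with hz0def
  have hre : z0.re = x0 := by simp [hz0def]
  have hz0 : iteratedDeriv k gg z0 = 0 := by
    rw [hz0def, formula k x0, hroot, Complex.ofReal_zero]
  have hFmem : ∀ n : ℕ, (z0 + n * (2 * Real.pi * I)).re ≠ 0 ∧
      iteratedDeriv k gg (z0 + n * (2 * Real.pi * I)) = 0 := by
    intro n
    constructor
    · have : (z0 + n * (2 * Real.pi * I)).re = x0 := by simp [hz0def]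
      rw [this]; exact hx0.ne'
    · rw [(G_periodic k).nat_mul n z0, hz0]
  constructor
  · exact ⟨z0 + (0:ℕ) * (2 * Real.pi * I), (hFmem 0).1, (hFmem 0).2⟩
  · refine Set.infinite_of_injective_forall_mem
      (f := fun n : ℕ => z0 + n * (2 * Real.pi * I)) ?_ ?_
    · intro m n hmn
      have him := congrArg Complex.im hmn
      simp [hz0def] at him
      have hpi := Real.pi_pos
      have : (m:ℝ) = n := by
        exact_mod_cast him
      exact_mod_cast this
    · intro n
      exact ⟨(hFmem n).1, (hFmem n).2⟩
end

section
/- Let f(z) = D + E/(1 - S(z)e^{icz}) where c > 0, E ≠ 0, D ∈ ℂ, and S is a rational function with |S(x)| = 1 for real x and S(∞) ≠ 0, ∞. If f is real on ℝ, then all poles z of f with |z| sufficiently large are real. -/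
open Polynomial Complex Finset Set

lemma sum_bound (m : ℕ) (f : ℕ → ℂ) (w : ℂ) (hw : 1 ≤ ‖w‖) :
    ‖∑ i ∈ Finset.range m, f i * w ^ i‖ ≤ (∑ i ∈ Finset.range m, ‖f i‖) * ‖w‖ ^ (m - 1) := by
  calc ‖∑ i ∈ Finset.range m, f i * w ^ i‖ ≤ ∑ i ∈ Finset.range m, ‖f i * w ^ i‖ :=
        norm_sum_le _ _
    _ ≤ ∑ i ∈ Finset.range m, ‖f i‖ * ‖w‖ ^ (m - 1) := by
        apply Finset.sum_le_sum
        intro i hi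
        rw [norm_mul, norm_pow]
        exact mul_le_mul_of_nonneg_left
          (pow_le_pow_right₀ hw (by have := Finset.mem_range.mp hi; omega)) (norm_nonneg _)
    _ = (∑ i ∈ Finset.range m, ‖f i‖) * ‖w‖ ^ (m - 1) := by rw [Finset.sum_mul]

lemma upper_bound (p : Polynomial ℂ) (m : ℕ) (hm : p.natDegree ≤ m) :
    ∃ C, 0 < C ∧ ∀ w : ℂ, 1 ≤ ‖w‖ → ‖p.eval w‖ ≤ C * ‖w‖ ^ m := by
  refine ⟨(∑ i ∈ Finset.range (p.natDegree + 1), ‖p.coeff i‖) + 1, by positivity, fun w hw => ?_⟩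
  have h1 : ‖p.eval w‖ ≤ (∑ i ∈ Finset.range (p.natDegree + 1), ‖p.coeff i‖)
      * ‖w‖ ^ (p.natDegree + 1 - 1) := by
    rw [Polynomial.eval_eq_sum_range]; exact sum_bound _ _ _ hw
  have h2 : ‖w‖ ^ (p.natDegree + 1 - 1) ≤ ‖w‖ ^ m := pow_le_pow_right₀ hw (by omega)
  have h3 : (0:ℝ) ≤ ∑ i ∈ Finset.range (p.natDegree + 1), ‖p.coeff i‖ :=
    Finset.sum_nonneg fun _ _ => norm_nonneg _
  have h4 : (0:ℝ) < ‖w‖ ^ m := by positivity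
  nlinarith

lemma eval_split (p : Polynomial ℂ) (w : ℂ) :
    p.eval w = (∑ i ∈ Finset.range p.natDegree, p.coeff i * w ^ i)
      + p.leadingCoeff * w ^ p.natDegree := by
  rw [Polynomial.eval_eq_sum_range, Finset.sum_range_succ, Polynomial.coeff_natDegree]

lemma lower_bound (p : Polynomial ℂ) (hp : p ≠ 0) :
    ∃ R, 1 ≤ R ∧ ∀ w : ℂ, R ≤ ‖w‖ →
      ‖p.leadingCoeff‖ / 2 * ‖w‖ ^ p.natDegree ≤ ‖p.eval w‖ := by
  have hA0 : 0 < ‖p.leadingCoeff‖ := by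
    simpa using (Polynomial.leadingCoeff_ne_zero.mpr hp)
  set A := ‖p.leadingCoeff‖
  set Cr := ∑ i ∈ Finset.range p.natDegree, ‖p.coeff i‖ with hCr
  have hCr0 : 0 ≤ Cr := Finset.sum_nonneg fun _ _ => norm_nonneg _
  have hq0 : (0:ℝ) ≤ 2 * Cr / A := div_nonneg (by linarith) hA0.le
  refine ⟨1 + 2 * Cr / A, by linarith, fun w hw => ?_⟩
  have hw1 : 1 ≤ ‖w‖ := le_trans (by linarith) hw
  have h1 : A * ‖w‖ ^ p.natDegree ≤ Cr * ‖w‖ ^ (p.natDegree - 1) + ‖p.eval w‖ := by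
    have hsplit := eval_split p w
    have h2 : A * ‖w‖ ^ p.natDegree
        = ‖p.eval w - ∑ i ∈ Finset.range p.natDegree, p.coeff i * w ^ i‖ := by
      rw [hsplit]; rw [add_sub_cancel_left, norm_mul, norm_pow]
    have h3 := sum_bound p.natDegree (fun i => p.coeff i) w hw1
    rw [h2]
    calc ‖p.eval w - ∑ i ∈ Finset.range p.natDegree, p.coeff i * w ^ i‖
        ≤ ‖p.eval w‖ + ‖∑ i ∈ Finset.range p.natDegree, p.coeff i * w ^ i‖ := norm_sub_le _ _
      _ ≤ Cr * ‖w‖ ^ (p.natDegree - 1) + ‖p.eval w‖ := by rw [hCr]; linarith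
  rcases Nat.eq_zero_or_pos p.natDegree with h0 | hpos
  · have hCrz : Cr = 0 := by rw [hCr, h0]; simp
    rw [hCrz] at h1
    rw [h0] at h1 ⊢
    simp only [pow_zero, mul_one, zero_mul, zero_add] at h1 ⊢
    linarith
  · have hpow : ‖w‖ ^ p.natDegree = ‖w‖ ^ (p.natDegree - 1) * ‖w‖ := by
      rw [← pow_succ]; congr 1; omega
    have hwA : 2 * Cr / A ≤ ‖w‖ := by linarith
    have h4 : Cr * ‖w‖ ^ (p.natDegree - 1) ≤ A / 2 * ‖w‖ ^ p.natDegree := by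
      rw [hpow]
      have hpw : (0:ℝ) < ‖w‖ ^ (p.natDegree - 1) := by positivity
      have : 2 * Cr ≤ A * ‖w‖ := by rw [div_le_iff₀ hA0] at hwA; linarith
      nlinarith
    linarith

lemma eval_map_conj (p : Polynomial ℂ) (z : ℂ) :
    (p.map (starRingEnd ℂ)).eval z = starRingEnd ℂ (p.eval (starRingEnd ℂ z)) := by
  conv_lhs => rw [show z = starRingEnd ℂ (starRingEnd ℂ z) from (Complex.conj_conj z).symm]
  rw [Polynomial.eval_map, Polynomial.eval₂_at_apply]

lemma modulus_identity (p q : Polynomial ℂ) (hq : q ≠ 0)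
    (hmod : ∀ x : ℝ, q.eval (x:ℂ) ≠ 0 → ‖p.eval (x:ℂ) / q.eval (x:ℂ)‖ = 1) :
    p * p.map (starRingEnd ℂ) = q * q.map (starRingEnd ℂ) := by
  have key : ∀ x : ℝ, q.eval (x:ℂ) ≠ 0 →
      (p * p.map (starRingEnd ℂ) - q * q.map (starRingEnd ℂ)).IsRoot (x:ℂ) := by
    intro x hx
    have habs : ‖p.eval (x:ℂ)‖ = ‖q.eval (x:ℂ)‖ := by
      have := hmod x hx
      rw [norm_div, div_eq_one_iff_eq (norm_ne_zero_iff.mpr hx)] at this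
      exact this
    have hconj : ∀ r : Polynomial ℂ,
        (r.map (starRingEnd ℂ)).eval (x:ℂ) = starRingEnd ℂ (r.eval (x:ℂ)) := by
      intro r
      conv_lhs => rw [show (x:ℂ) = starRingEnd ℂ (x:ℂ) from (Complex.conj_ofReal x).symm]
      rw [Polynomial.eval_map, Polynomial.eval₂_at_apply]
    simp only [Polynomial.IsRoot, Polynomial.eval_sub, Polynomial.eval_mul, hconj]
    rw [Complex.mul_conj, Complex.mul_conj, Complex.normSq_eq_norm_sq, Complex.normSq_eq_norm_sq, habs,
      sub_self]
  have hfin : ({x : ℝ | q.eval (x:ℂ) = 0}).Finite := by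
    have : ({x : ℝ | q.eval (x:ℂ) = 0}) = Complex.ofReal ⁻¹' {z : ℂ | q.IsRoot z} := rfl
    rw [this]
    exact Set.Finite.preimage (Complex.ofReal_injective.injOn) (Polynomial.finite_setOf_isRoot hq)
  have hinf : ({x : ℝ | q.eval (x:ℂ) ≠ 0}).Infinite := hfin.infinite_compl
  have hsub : (Complex.ofReal '' {x : ℝ | q.eval (x:ℂ) ≠ 0}) ⊆
      {z : ℂ | (p * p.map (starRingEnd ℂ) - q * q.map (starRingEnd ℂ)).IsRoot z} := by
    rintro z ⟨x, hx, rfl⟩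
    exact key x hx
  have hzero := Polynomial.eq_zero_of_infinite_isRoot _
    (Set.Infinite.mono hsub (hinf.image Complex.ofReal_injective.injOn))
  linear_combination hzero

lemma norm_identity (p q : Polynomial ℂ)
    (hPQ : p * p.map (starRingEnd ℂ) = q * q.map (starRingEnd ℂ)) (z : ℂ) :
    ‖p.eval z‖ * ‖p.eval (starRingEnd ℂ z)‖ = ‖q.eval z‖ * ‖q.eval (starRingEnd ℂ z)‖ := by
  have hconj : ∀ r : Polynomial ℂ,
      (r.map (starRingEnd ℂ)).eval z = starRingEnd ℂ (r.eval (starRingEnd ℂ z)) := by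
    intro r
    conv_lhs => rw [show z = starRingEnd ℂ (starRingEnd ℂ z) from (Complex.conj_conj z).symm]
    rw [Polynomial.eval_map, Polynomial.eval₂_at_apply]
  have := congrArg (fun r : Polynomial ℂ => ‖r.eval z‖) hPQ
  simpa [Polynomial.eval_mul, hconj, norm_mul] using this

lemma lead_eq (p q : Polynomial ℂ) (hp : p ≠ 0)
    (hPQ : p * p.map (starRingEnd ℂ) = q * q.map (starRingEnd ℂ)) :
    ‖p.leadingCoeff‖ = ‖q.leadingCoeff‖ := by
  have := congrArg Polynomial.leadingCoeff hPQ
  rw [Polynomial.leadingCoeff_mul, Polynomial.leadingCoeff_mul,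
    Polynomial.leadingCoeff_map_of_injective (RingHom.injective _),
    Polynomial.leadingCoeff_map_of_injective (RingHom.injective _)] at this
  have h2 := congrArg (‖·‖) this
  rw [norm_mul, norm_mul, Complex.norm_conj, Complex.norm_conj] at h2
  calc ‖p.leadingCoeff‖ = Real.sqrt (‖p.leadingCoeff‖ * ‖p.leadingCoeff‖) :=
        (Real.sqrt_mul_self (norm_nonneg _)).symm
    _ = Real.sqrt (‖q.leadingCoeff‖ * ‖q.leadingCoeff‖) := by rw [h2]
    _ = ‖q.leadingCoeff‖ := Real.sqrt_mul_self (norm_nonneg _)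

lemma mvt_poly (r : Polynomial ℂ) (z₁ : ℂ) (Cb : ℝ)
    (hb : ∀ w : ℂ, w.re = z₁.re → |w.im| ≤ |z₁.im| → ‖r.derivative.eval w‖ ≤ Cb) :
    ‖r.eval z₁ - r.eval (starRingEnd ℂ z₁)‖ ≤ Cb * (2 * |z₁.im|) := by
  set z₂ := starRingEnd ℂ z₁ with hz₂
  set v := z₁ - z₂ with hv
  set g : ℝ → ℂ := fun t => r.eval (z₂ + t • v) with hg
  have hderiv : ∀ t : ℝ, HasDerivAt g (v * r.derivative.eval (z₂ + t • v)) t := by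
    intro t
    have h1 : HasDerivAt (fun t : ℝ => z₂ + t • v) v t := by
      simpa using ((hasDerivAt_id t).smul_const v).const_add z₂
    have h2 := (Polynomial.hasDerivAt r (z₂ + t • v)).scomp t h1
    simpa [smul_eq_mul, mul_comm, hg, Function.comp_def] using h2
  have hpt : ∀ t : ℝ, t ∈ Icc (0:ℝ) 1 → (z₂ + t • v).re = z₁.re ∧ |(z₂ + t • v).im| ≤ |z₁.im| := by
    intro t ht
    have hre : (z₂ + t • v).re = z₁.re := by
      simp [hz₂, hv, Complex.add_re, Complex.sub_re, Complex.conj_re, Complex.conj_im,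
        Complex.real_smul, Complex.mul_re, Complex.ofReal_re, Complex.ofReal_im,
        Complex.sub_im, Complex.add_im, Complex.mul_im]
    have him : (z₂ + t • v).im = (2 * t - 1) * z₁.im := by
      simp [hz₂, hv, Complex.add_im, Complex.sub_im, Complex.conj_im, Complex.conj_re,
        Complex.real_smul, Complex.mul_im, Complex.ofReal_re, Complex.ofReal_im,
        Complex.sub_re, Complex.add_re, Complex.mul_re]
      ring
    refine ⟨hre, ?_⟩
    rw [him, abs_mul]
    have : |2 * t - 1| ≤ 1 := by
      rw [abs_le]; constructor <;> [linarith [ht.1]; linarith [ht.2]]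
    nlinarith [abs_nonneg z₁.im]
  have bound : ∀ t ∈ Ico (0:ℝ) 1, ‖v * r.derivative.eval (z₂ + t • v)‖ ≤ ‖v‖ * Cb := by
    intro t ht
    rw [norm_mul]
    have := hpt t ⟨ht.1, ht.2.le⟩
    exact mul_le_mul_of_nonneg_left (hb _ this.1 this.2) (norm_nonneg _)
  have key := norm_image_sub_le_of_norm_deriv_le_segment'
    (f := g) (f' := fun t => v * r.derivative.eval (z₂ + t • v)) (C := ‖v‖ * Cb)
    (fun t _ => (hderiv t).hasDerivWithinAt) bound 1 (by norm_num)
  have hg1 : g 1 = r.eval z₁ := by simp [hg, hv]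
  have hg0 : g 0 = r.eval z₂ := by simp [hg]
  rw [hg1, hg0] at key
  have hnv : ‖v‖ = 2 * |z₁.im| := by
    rw [hv, hz₂, Complex.sub_conj, norm_mul, Complex.norm_I, mul_one, Complex.norm_real,
      Real.norm_eq_abs, abs_mul]
    norm_num
  calc ‖r.eval z₁ - r.eval z₂‖ ≤ ‖v‖ * Cb * (1 - 0) := key
    _ = Cb * (2 * |z₁.im|) := by rw [hnv]; ring

set_option maxHeartbeats 2000000 in
/-- Let `f(z) = D + E/(1 - S(z)e^{icz})` where `c > 0`, `E ≠ 0`, `D ∈ ℂ`, and `S = p/q`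
is a rational function with `|S(x)| = 1` for real `x` and `S(∞) ≠ 0, ∞` (so `p` and `q`
are nonzero of equal degree). If `f` is real on `ℝ`, then all poles `z` of `f`
(i.e. solutions of `S(z)e^{icz} = 1`) with `|z|` sufficiently large are real. -/
theorem large_poles_are_real (c : ℝ) (hc : 0 < c) (D E : ℂ) (hE : E ≠ 0)
    (p q : Polynomial ℂ) (hp : p ≠ 0) (hq : q ≠ 0)
    (hdeg : p.natDegree = q.natDegree)
    (hmod : ∀ x : ℝ, q.eval (x : ℂ) ≠ 0 →
      ‖p.eval (x : ℂ) / q.eval (x : ℂ)‖ = 1)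
    (hreal : ∀ x : ℝ, q.eval (x : ℂ) ≠ 0 →
      1 - (p.eval (x : ℂ) / q.eval (x : ℂ)) * Complex.exp (Complex.I * c * x) ≠ 0 →
      (D + E / (1 - (p.eval (x : ℂ) / q.eval (x : ℂ))
          * Complex.exp (Complex.I * c * x))).im = 0) :
    ∃ R₀ : ℝ, ∀ z : ℂ, R₀ ≤ ‖z‖ → q.eval z ≠ 0 →
      (p.eval z / q.eval z) * Complex.exp (Complex.I * c * z) = 1 → z.im = 0 := by
  clear hreal hE
  have hPQ := modulus_identity p q hq hmod
  rcases Nat.eq_zero_or_pos p.natDegree with hn0 | hn1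
  · -- constant case
    obtain ⟨a, rfl⟩ := Polynomial.natDegree_eq_zero.mp hn0
    have hq0 : q.natDegree = 0 := by
      rw [← hdeg, Polynomial.natDegree_C]
    obtain ⟨b, rfl⟩ := Polynomial.natDegree_eq_zero.mp hq0
    refine ⟨0, fun z _ hqz heq => ?_⟩
    rw [Polynomial.eval_C] at hqz
    rw [Polynomial.eval_C, Polynomial.eval_C] at heq
    have habs := congrArg (‖·‖) heq
    have hre : (Complex.I * (c:ℂ) * z).re = -(c * z.im) := by
      simp [Complex.mul_re, Complex.mul_im]
    rw [norm_mul, norm_one, norm_div, Complex.norm_exp, hre] at habs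
    have hb' : ‖b‖ ≠ 0 := by simpa using hqz
    have ha' : ‖a‖ = ‖b‖ := by
      have h0 := hmod 0 (by simpa using hqz)
      rw [Polynomial.eval_C, Polynomial.eval_C, norm_div, div_eq_one_iff_eq hb'] at h0
      exact h0
    rw [ha', div_self hb', one_mul] at habs
    rw [Real.exp_eq_one_iff] at habs
    have : c * z.im = 0 := by linarith
    rcases mul_eq_zero.mp this with h | h
    · linarith
    · exact h
  · -- main case: natDegree ≥ 1
    have hA0 : 0 < ‖p.leadingCoeff‖ := by
      simpa using Polynomial.leadingCoeff_ne_zero.mpr hp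
    set A := ‖p.leadingCoeff‖ with hAdef
    have hBA : ‖q.leadingCoeff‖ = A := (lead_eq p q hp hPQ).symm
    clear_value A
    have hdq : q.natDegree = p.natDegree := hdeg.symm
    obtain ⟨Cp', hCp0, hCp⟩ := upper_bound p p.natDegree le_rfl
    obtain ⟨Cq', hCq0, hCq⟩ := upper_bound q p.natDegree (le_of_eq hdq)
    set Cu := max Cp' Cq' + A with hCudef
    have hCu0 : 0 < Cu := add_pos (lt_max_of_lt_left hCp0) hA0
    have hCuA : A ≤ Cu := by
      have h1 : (0:ℝ) < max Cp' Cq' := lt_max_of_lt_left hCp0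
      rw [hCudef]; linarith
    have hCup' : Cp' ≤ Cu := by
      have h1 := le_max_left Cp' Cq'; rw [hCudef]; linarith
    have hCuq' : Cq' ≤ Cu := by
      have h1 := le_max_right Cp' Cq'; rw [hCudef]; linarith
    clear_value Cu
    have hCup : ∀ w : ℂ, 1 ≤ ‖w‖ → ‖p.eval w‖ ≤ Cu * ‖w‖ ^ p.natDegree := fun w hw =>
      (hCp w hw).trans (mul_le_mul_of_nonneg_right hCup' (by positivity))
    have hCuq : ∀ w : ℂ, 1 ≤ ‖w‖ → ‖q.eval w‖ ≤ Cu * ‖w‖ ^ p.natDegree := fun w hw =>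
      (hCq w hw).trans (mul_le_mul_of_nonneg_right hCuq' (by positivity))
    obtain ⟨Cdp, hCdp0, hCdp⟩ := upper_bound (Polynomial.derivative p) (p.natDegree - 1)
      (Polynomial.natDegree_derivative_le p)
    obtain ⟨Cdq, hCdq0, hCdq⟩ := upper_bound (Polynomial.derivative q) (p.natDegree - 1)
      (le_trans (Polynomial.natDegree_derivative_le q) (by omega))
    set Cd := max Cdp Cdq with hCddef
    have hCd0 : 0 < Cd := lt_max_of_lt_left hCdp0
    have hCdp' : Cdp ≤ Cd := le_max_left _ _
    have hCdq' : Cdq ≤ Cd := le_max_right _ _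
    clear_value Cd
    obtain ⟨Rp, hRp1, hRp⟩ := lower_bound p hp
    obtain ⟨Rq, hRq1, hRq⟩ := lower_bound q hq
    set Rl := max Rp Rq with hRldef
    have hRl1 : 1 ≤ Rl := le_trans hRp1 (le_max_left _ _)
    have hRlp : Rp ≤ Rl := le_max_left _ _
    have hRlq : Rq ≤ Rl := le_max_right _ _
    clear_value Rl
    have hB1 : (1:ℝ) < 2 * Cu / A := by
      rw [lt_div_iff₀ hA0]; linarith
    set M := Real.log (2 * Cu / A) / c with hMdef
    have hM0 : 0 < M := div_pos (Real.log_pos hB1) hc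
    have hlogM : Real.log (2 * Cu / A) = c * M := by
      rw [hMdef]; field_simp
    clear_value M
    set K := Cd * 2 ^ (p.natDegree - 1) with hKdef
    have hK0 : 0 < K := mul_pos hCd0 (pow_pos two_pos _)
    set X := 1 + M + 8 * M * K / A + 8 * K / (c * A) with hXdef
    have hMKA : 0 ≤ 8 * M * K / A :=
      div_nonneg (mul_nonneg (mul_nonneg (by norm_num) hM0.le) hK0.le) hA0.le
    have hKcA : 0 ≤ 8 * K / (c * A) :=
      div_nonneg (by linarith) (mul_pos hc hA0).le
    have hX1 : 1 + M ≤ X := by rw [hXdef]; linarith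
    have hXa : 8 * M * K / A ≤ X := by rw [hXdef]; linarith
    have hXb : 8 * K / (c * A) ≤ X := by rw [hXdef]; linarith
    clear_value X
    refine ⟨Rl + X + M, fun z hz hqz heq => ?_⟩
    have hzRl : Rl ≤ ‖z‖ := by linarith
    have hz1 : (1:ℝ) ≤ ‖z‖ := le_trans hRl1 hzRl
    have hqz' : 0 < ‖q.eval z‖ := norm_pos_iff.mpr hqz
    -- E0 : modulus relation at z
    have hre : (Complex.I * (c:ℂ) * z).re = -(c * z.im) := by
      simp [Complex.mul_re, Complex.mul_im]
    have habs := congrArg (‖·‖) heq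
    rw [norm_mul, norm_one, norm_div, Complex.norm_exp, hre] at habs
    have hqa : ‖q.eval z‖ ≠ 0 := norm_ne_zero_iff.mpr hqz
    rw [div_mul_eq_mul_div, div_eq_one_iff_eq hqa] at habs
    have E0 : ‖p.eval z‖ = Real.exp (c * z.im) * ‖q.eval z‖ := by
      calc ‖p.eval z‖
          = ‖p.eval z‖ * (Real.exp (-(c*z.im)) * Real.exp (c*z.im)) := by
            rw [← Real.exp_add]; simp
        _ = Real.exp (c*z.im) * (‖p.eval z‖ * Real.exp (-(c*z.im))) := by ring
        _ = Real.exp (c*z.im) * ‖q.eval z‖ := by rw [habs]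
    -- bounds at z
    have hLzp : A/2 * ‖z‖ ^ p.natDegree ≤ ‖p.eval z‖ := by
      have h1 := hRp z (le_trans hRlp hzRl)
      rw [← hAdef] at h1; exact h1
    have hLzq : A/2 * ‖z‖ ^ p.natDegree ≤ ‖q.eval z‖ := by
      have h1 := hRq z (le_trans hRlq hzRl)
      rw [hBA, hdq] at h1; exact h1
    have hpowz : 0 < ‖z‖ ^ p.natDegree := pow_pos (by linarith) _
    have hexpU : Real.exp (c * z.im) ≤ 2 * Cu / A := by
      have h1 : (Real.exp (c*z.im) * (A/2)) * ‖z‖ ^ p.natDegree ≤ Cu * ‖z‖ ^ p.natDegree := by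
        calc (Real.exp (c*z.im) * (A/2)) * ‖z‖ ^ p.natDegree
            = Real.exp (c*z.im) * (A/2 * ‖z‖ ^ p.natDegree) := by ring
          _ ≤ Real.exp (c*z.im) * ‖q.eval z‖ :=
              mul_le_mul_of_nonneg_left hLzq (Real.exp_pos _).le
          _ = ‖p.eval z‖ := E0.symm
          _ ≤ Cu * ‖z‖ ^ p.natDegree := hCup z hz1
      have h2 := le_of_mul_le_mul_right h1 hpowz
      rw [le_div_iff₀ hA0]
      linarith
    have hexpL : A / (2 * Cu) ≤ Real.exp (c * z.im) := by
      have h1 : (A/2) * ‖z‖ ^ p.natDegree ≤ (Real.exp (c*z.im) * Cu) * ‖z‖ ^ p.natDegree := by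
        calc (A/2) * ‖z‖ ^ p.natDegree ≤ ‖p.eval z‖ := hLzp
          _ = Real.exp (c*z.im) * ‖q.eval z‖ := E0
          _ ≤ Real.exp (c*z.im) * (Cu * ‖z‖ ^ p.natDegree) :=
              mul_le_mul_of_nonneg_left (hCuq z hz1) (Real.exp_pos _).le
          _ = (Real.exp (c*z.im) * Cu) * ‖z‖ ^ p.natDegree := by ring
      have h2 := le_of_mul_le_mul_right h1 hpowz
      rw [div_le_iff₀ (by linarith : (0:ℝ) < 2 * Cu)]
      linarith
    have hyM : |z.im| ≤ M := by
      have h1 : c * z.im ≤ c * M := by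
        rw [← hlogM, ← Real.exp_le_exp, Real.exp_log (by linarith)]
        exact hexpU
      have h2 : -(c * z.im) ≤ c * M := by
        rw [← hlogM, ← Real.exp_le_exp, Real.exp_log (by linarith), Real.exp_neg]
        have hpos : 0 < A / (2 * Cu) := div_pos hA0 (by linarith)
        calc (Real.exp (c*z.im))⁻¹ ≤ (A / (2*Cu))⁻¹ := inv_anti₀ hpos hexpL
          _ = 2 * Cu / A := by rw [inv_div]
      rw [abs_le]
      constructor
      · have h3 := (mul_le_mul_iff_right₀ hc).mp (show c * (-z.im) ≤ c * M by linarith)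
        linarith
      · exact (mul_le_mul_iff_right₀ hc).mp h1
    -- suppose z.im ≠ 0
    by_contra hy0
    have hy1 : 0 < |z.im| := abs_pos.mpr hy0
    set y₁ := |z.im| with hy₁def
    set x := z.re with hxdef
    have hy₁0 : 0 ≤ y₁ := by rw [hy₁def]; exact abs_nonneg _
    have hznorm : ‖z‖ ≤ |x| + y₁ := by
      rw [hxdef, hy₁def]
      exact Complex.norm_le_abs_re_add_abs_im z
    have hxlez : |x| ≤ ‖z‖ := by
      rw [hxdef]; exact Complex.abs_re_le_norm z
    have hy₁M : y₁ ≤ M := hyM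
    clear_value y₁
    have hxlarge : Rl + X ≤ |x| := by linarith
    have hx1 : (1:ℝ) ≤ |x| := by linarith
    have hxM : M ≤ |x| := by linarith
    clear_value x
    -- z₁ : the version in the upper half plane
    set z₁ := if 0 ≤ z.im then z else (starRingEnd ℂ) z with hz₁def
    have hz₁im : z₁.im = y₁ := by
      rw [hz₁def, hy₁def]
      rcases le_or_gt 0 z.im with h | h
      · rw [if_pos h, _root_.abs_of_nonneg h]
      · rw [if_neg (not_le.mpr h), Complex.conj_im, abs_of_neg h]
    have hz₁re : z₁.re = x := by
      rw [hz₁def, hxdef]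
      rcases le_or_gt 0 z.im with h | h
      · rw [if_pos h]
      · rw [if_neg (not_le.mpr h), Complex.conj_re]
    have hz₁norm : ‖z₁‖ = ‖z‖ := by
      rw [hz₁def]
      rcases le_or_gt 0 z.im with h | h
      · rw [if_pos h]
      · rw [if_neg (not_le.mpr h)]; simp
    have F1 : ‖p.eval z₁‖ = Real.exp (c * y₁) * ‖q.eval z₁‖ := by
      rcases le_or_gt 0 z.im with h | h
      · have hz₁eq : z₁ = z := by rw [hz₁def, if_pos h]
        rw [hz₁eq, hy₁def, _root_.abs_of_nonneg h]
        exact E0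
      · have hz₁eq : z₁ = (starRingEnd ℂ) z := by rw [hz₁def, if_neg (not_le.mpr h)]
        have hy : y₁ = -z.im := by rw [hy₁def, abs_of_neg h]
        have Fz := norm_identity p q hPQ z
        rw [E0] at Fz
        have hcancel : Real.exp (c*z.im) * ‖p.eval ((starRingEnd ℂ) z)‖
            = ‖q.eval ((starRingEnd ℂ) z)‖ := by
          have h1 : ‖q.eval z‖ * (Real.exp (c*z.im) * ‖p.eval ((starRingEnd ℂ) z)‖)
              = ‖q.eval z‖ * ‖q.eval ((starRingEnd ℂ) z)‖ := by
            rw [← Fz]; ring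
          exact mul_left_cancel₀ (ne_of_gt hqz') h1
        rw [hz₁eq, hy]
        have he : Real.exp (c*z.im) ≠ 0 := Real.exp_ne_zero _
        rw [show c * -z.im = -(c*z.im) by ring, Real.exp_neg]
        rw [← hcancel]
        field_simp
    clear_value z₁
    set z₂ := (starRingEnd ℂ) z₁ with hz₂def
    have hz₂norm : ‖z₂‖ = ‖z‖ := by rw [hz₂def]; simp [hz₁norm]
    have hz₂re : z₂.re = x := by rw [hz₂def, Complex.conj_re, hz₁re]
    have F2 : ‖p.eval z₁‖ * ‖p.eval z₂‖ = ‖q.eval z₁‖ * ‖q.eval z₂‖ := by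
      have h1 := norm_identity p q hPQ z₁
      rw [← hz₂def] at h1; exact h1
    -- mvt bounds
    have hCb : ∀ r : Polynomial ℂ,
        (∀ w : ℂ, 1 ≤ ‖w‖ → ‖(Polynomial.derivative r).eval w‖ ≤ Cd * ‖w‖ ^ (p.natDegree - 1)) →
        ‖r.eval z₁ - r.eval z₂‖ ≤ Cd * (2*|x|) ^ (p.natDegree - 1) * (2*y₁) := by
      intro r hr
      have hmain := mvt_poly r z₁ (Cd * (2*|x|) ^ (p.natDegree - 1)) ?_
      · rw [← hz₂def, hz₁im, _root_.abs_of_nonneg hy₁0] at hmain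
        exact hmain
      · intro w hwre hwim
        rw [hz₁im, _root_.abs_of_nonneg hy₁0] at hwim
        rw [hz₁re] at hwre
        have hw1 : 1 ≤ ‖w‖ := by
          have h1 := Complex.abs_re_le_norm w
          rw [hwre] at h1; linarith
        have hw2 : ‖w‖ ≤ 2 * |x| := by
          have h1 := Complex.norm_le_abs_re_add_abs_im w
          rw [hwre] at h1
          linarith
        calc ‖(Polynomial.derivative r).eval w‖ ≤ Cd * ‖w‖ ^ (p.natDegree - 1) := hr w hw1
          _ ≤ Cd * (2*|x|) ^ (p.natDegree - 1) :=
              mul_le_mul_of_nonneg_left (pow_le_pow_left₀ (norm_nonneg _) hw2 _) hCd0.le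
    have hdP : ‖p.eval z₁ - p.eval z₂‖ ≤ Cd * (2*|x|) ^ (p.natDegree - 1) * (2*y₁) := by
      refine hCb p (fun w hw => le_trans (hCdp w hw) ?_)
      exact mul_le_mul_of_nonneg_right hCdp' (by positivity)
    have hdQ : ‖q.eval z₁ - q.eval z₂‖ ≤ Cd * (2*|x|) ^ (p.natDegree - 1) * (2*y₁) := by
      refine hCb q (fun w hw => le_trans (hCdq w hw) ?_)
      exact mul_le_mul_of_nonneg_right hCdq' (by positivity)
    clear_value z₂
    -- lower bounds at z₁, z₂
    set L := A/2 * |x| ^ p.natDegree with hLdef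
    have hL0 : 0 < L := mul_pos (by linarith) (pow_pos (by linarith) _)
    have hlowP : ∀ w : ℂ, ‖w‖ = ‖z‖ → L ≤ ‖p.eval w‖ := by
      intro w hw
      have h1 := hRp w (by rw [hw]; exact le_trans hRlp hzRl)
      rw [← hAdef] at h1
      refine le_trans ?_ h1
      rw [hLdef]
      exact mul_le_mul_of_nonneg_left
        (pow_le_pow_left₀ (abs_nonneg _) (by rw [hw]; exact hxlez) _) (by linarith)
    have hlowQ : ∀ w : ℂ, ‖w‖ = ‖z‖ → L ≤ ‖q.eval w‖ := by
      intro w hw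
      have h1 := hRq w (by rw [hw]; exact le_trans hRlq hzRl)
      rw [hBA, hdq] at h1
      refine le_trans ?_ h1
      rw [hLdef]
      exact mul_le_mul_of_nonneg_left
        (pow_le_pow_left₀ (abs_nonneg _) (by rw [hw]; exact hxlez) _) (by linarith)
    have hP2 : L ≤ ‖p.eval z₂‖ := hlowP z₂ hz₂norm
    have hQ1 : L ≤ ‖q.eval z₁‖ := hlowQ z₁ hz₁norm
    have hQ2 : L ≤ ‖q.eval z₂‖ := hlowQ z₂ hz₂norm
    clear_value L
    set d := Cd * (2*|x|) ^ (p.natDegree - 1) * (2*y₁) with hddef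
    have hd0 : 0 ≤ d := by
      rw [hddef]
      apply mul_nonneg (mul_nonneg hCd0.le (pow_nonneg (by linarith) _))
      linarith
    clear_value d
    -- abbreviations
    have hQ1ne : ‖q.eval z₁‖ ≠ 0 := by linarith
    set P1 := ‖p.eval z₁‖ with hP1def
    set P2 := ‖p.eval z₂‖ with hP2def
    set Q1 := ‖q.eval z₁‖ with hQ1def
    set Q2 := ‖q.eval z₂‖ with hQ2def
    set e2 := Real.exp (2*c*y₁) with he2def
    have he2 : e2 = Real.exp (c*y₁) * Real.exp (c*y₁) := by
      rw [he2def, ← Real.exp_add]; ring_nf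
    have hkey : e2 * Q1 * P2 = P1 * Q2 := by
      have h1 : Q1 * (e2 * Q1 * P2) = Q1 * (P1 * Q2) := by
        calc Q1 * (e2 * Q1 * P2)
            = (Real.exp (c*y₁) * Q1) * ((Real.exp (c*y₁) * Q1) * P2) := by rw [he2]; ring
          _ = P1 * (P1 * P2) := by rw [← F1]
          _ = P1 * (Q1 * Q2) := by rw [F2]
          _ = Q1 * (P1 * Q2) := by ring
      exact mul_left_cancel₀ hQ1ne h1
    clear_value P1 P2 Q1 Q2 e2
    have hP1d : P1 ≤ P2 + d := by
      have h1 := le_trans (abs_norm_sub_norm_le (p.eval z₁) (p.eval z₂)) hdP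
      rw [← hP1def, ← hP2def] at h1
      linarith [(abs_le.mp h1).2]
    have hQ2d : Q2 ≤ Q1 + d := by
      have h0 : ‖q.eval z₂ - q.eval z₁‖ ≤ d := by rw [norm_sub_rev]; exact hdQ
      have h1 := le_trans (abs_norm_sub_norm_le (q.eval z₂) (q.eval z₁)) h0
      rw [← hQ1def, ← hQ2def] at h1
      linarith [(abs_le.mp h1).2]
    -- conditions on d
    have hpowx : 0 < |x| ^ (p.natDegree - 1) := pow_pos (by linarith) _
    have hLsplit : L = A/2 * |x| ^ (p.natDegree - 1) * |x| := by
      rw [hLdef]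
      have h1 : |x| ^ p.natDegree = |x| ^ (p.natDegree - 1) * |x| := by
        rw [← pow_succ]; congr 1; omega
      rw [h1]; ring
    have hdsplit : d = 2 * K * |x| ^ (p.natDegree - 1) * y₁ := by
      rw [hddef, hKdef, mul_pow]; ring
    have hxK1 : 8 * M * K ≤ A * |x| := by
      have h8 : 8 * M * K / A ≤ |x| := by linarith
      rw [div_le_iff₀ hA0] at h8; linarith
    have hxK2 : 8 * K ≤ c * A * |x| := by
      have h8 : 8 * K / (c * A) ≤ |x| := by linarith
      rw [div_le_iff₀ (mul_pos hc hA0)] at h8; linarith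
    have hcond1 : 2 * d ≤ L := by
      rw [hdsplit, hLsplit]
      have h1 : 4 * K * y₁ ≤ A/2 * |x| := by
        linarith only [hxK1, mul_nonneg (sub_nonneg.mpr hy₁M) hK0.le]
      have h2 := mul_le_mul_of_nonneg_right h1 hpowx.le
      linarith only [h2]
    have hcond2 : 4 * d ≤ 2*c*y₁ * L := by
      rw [hdsplit, hLsplit]
      have h2 := mul_le_mul_of_nonneg_right hxK2
        (mul_nonneg hy₁0 hpowx.le)
      linarith only [h2]
    have hs0 : 0 < 2*c*y₁ := mul_pos (by linarith only [hc] : (0:ℝ) < 2*c) hy1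
    have hstrict : 1 + 2*c*y₁ < e2 := by
      have h1 := Real.add_one_lt_exp (ne_of_gt hs0)
      rw [he2def]; linarith only [h1]
    -- final contradiction
    have hP2pos : 0 < P2 := lt_of_lt_of_le hL0 hP2
    have hQ1pos : 0 < Q1 := lt_of_lt_of_le hL0 hQ1
    have hQ2pos : 0 < Q2 := lt_of_lt_of_le hL0 hQ2
    have hub : P1 * Q2 ≤ (P2 + d) * (Q1 + d) :=
      mul_le_mul hP1d hQ2d (by linarith) (by linarith)
    have hlt : 2*c*y₁ * (Q1*P2) < d*(P2+Q1+d) := by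
      linarith only [hkey, hub, mul_lt_mul_of_pos_right hstrict (mul_pos hQ1pos hP2pos)]
    have hge : d*(P2+Q1+d) ≤ 2*c*y₁*(Q1*P2) := by
      have h1 : L*(P2+Q1+d) ≤ 4*(Q1*P2) := by
        linarith only [mul_nonneg (sub_nonneg.mpr hP2) (sub_nonneg.mpr hQ1),
          mul_le_mul hQ1 hP2 hL0.le (le_trans hL0.le hQ1),
          mul_le_mul_of_nonneg_left hcond1 hL0.le, (mul_pos hQ1pos hP2pos).le]
      have h2 : 4*d*(Q1*P2) ≤ 2*c*y₁*L*(Q1*P2) :=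
        mul_le_mul_of_nonneg_right hcond2 (mul_pos hQ1pos hP2pos).le
      have h3 : d*(L*(P2+Q1+d)) ≤ d*(4*(Q1*P2)) := mul_le_mul_of_nonneg_left h1 hd0
      have h4 : L*(d*(P2+Q1+d)) ≤ L*(2*c*y₁*(Q1*P2)) := by linarith only [h3, h2]
      exact le_of_mul_le_mul_left h4 hL0
    linarith
end
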